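/- Let Ĥ be a full-row-rank p×q real matrix and suppose the noise level δ satisfies δ < σ_min(Ĥ)/(2 l_h), and the perturbation E = Ĥ − H̄ satisfies ‖E‖₂ ≤ l_h·δ. Then ‖H̄†‖₂ ≤ 2·σ_min(Ĥ)⁻¹ and ‖H̄† − Ĥ†‖₂ ≤ 8·l_h·‖Ĥ†‖₂²·δ. -/

import Mathlib

/-- Euclidean (ℓ²) norm of a finite real vector. -/
noncomputable def enormL2 {n : Type*} [Fintype n] (x : n → ℝ) : ℝ :=
  ‖(WithLp.equiv 2 (n → ℝ)).symm x‖

/-- Spectral norm (operator norm induced by the Euclidean norm) of a real matrix. -/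
noncomputable def specNorm {m n : Type*} [Fintype m] [Fintype n] (M : Matrix m n ℝ) : ℝ :=
  ⨆ v : {v : n → ℝ // enormL2 v ≤ 1}, enormL2 (M.mulVec v.1)

/-- Smallest singular value of a real matrix `M`, computed as
`min_{‖v‖ = 1} ‖Mᵀ v‖` (the transpose formulation). -/
noncomputable def sigmaMin {m n : Type*} [Fintype m] [Fintype n] (M : Matrix m n ℝ) : ℝ :=
  ⨅ v : {v : m → ℝ // enormL2 v = 1}, enormL2 (M.transpose.mulVec v.1)

/-- Moore–Penrose pseudoinverse of a full-row-rank matrix: `M† = Mᵀ (M Mᵀ)⁻¹`. -/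
noncomputable def pinvFR {m n : Type*} [Fintype m] [Fintype n] [DecidableEq m]
    (M : Matrix m n ℝ) : Matrix n m ℝ :=
  M.transpose * (M * M.transpose)⁻¹

theorem test : True := trivial

open scoped RealInnerProductSpace

namespace PinvAux

variable {m n k : Type*} [Fintype m] [Fintype n] [Fintype k]
variable [DecidableEq m] [DecidableEq n] [DecidableEq k]

/-- The continuous linear map on Euclidean spaces associated with a matrix. -/
noncomputable def mclm (M : Matrix m n ℝ) : EuclideanSpace ℝ n →L[ℝ] EuclideanSpace ℝ m :=
  LinearMap.toContinuousLinearMap (Matrix.toEuclideanLin M)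

lemma mclm_apply (M : Matrix m n ℝ) (x : EuclideanSpace ℝ n) :
    mclm M x = (WithLp.equiv 2 (m → ℝ)).symm (M.mulVec ((WithLp.equiv 2 (n → ℝ)) x)) :=
  Matrix.toEuclideanLin_apply M x

lemma enorm_eq (v : n → ℝ) : enormL2 v = ‖(WithLp.equiv 2 (n → ℝ)).symm v‖ := rfl

lemma enorm_nonneg (v : n → ℝ) : 0 ≤ enormL2 v := norm_nonneg _

lemma enorm_mulVec (M : Matrix m n ℝ) (v : n → ℝ) :
    enormL2 (M.mulVec v) = ‖mclm M ((WithLp.equiv 2 (n → ℝ)).symm v)‖ := by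
  rw [mclm_apply]
  simp [enormL2]

lemma specNorm_nonneg (M : Matrix m n ℝ) : 0 ≤ specNorm M :=
  Real.iSup_nonneg fun v => enorm_nonneg _

lemma specNorm_bdd (M : Matrix m n ℝ) :
    ∀ v : {v : n → ℝ // enormL2 v ≤ 1}, enormL2 (M.mulVec v.1) ≤ ‖mclm M‖ := by
  rintro ⟨v, hv⟩
  rw [enorm_mulVec]
  calc ‖mclm M ((WithLp.equiv 2 (n → ℝ)).symm v)‖
      ≤ ‖mclm M‖ * ‖(WithLp.equiv 2 (n → ℝ)).symm v‖ := (mclm M).le_opNorm _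
    _ ≤ ‖mclm M‖ * 1 := mul_le_mul_of_nonneg_left hv (norm_nonneg _)
    _ = ‖mclm M‖ := mul_one _

lemma specNorm_eq_opNorm (M : Matrix m n ℝ) : specNorm M = ‖mclm M‖ := by
  haveI : Nonempty {v : n → ℝ // enormL2 v ≤ 1} :=
    ⟨⟨0, by simp [enormL2]⟩⟩
  refine le_antisymm (ciSup_le (specNorm_bdd M)) ?_
  refine ContinuousLinearMap.opNorm_le_bound _ (specNorm_nonneg M) fun x => ?_
  rcases eq_or_ne x 0 with rfl | hx
  · simp
  · have h0 : (0:ℝ) < ‖x‖ := norm_pos_iff.mpr hx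
    set u : EuclideanSpace ℝ n := ‖x‖⁻¹ • x with hu
    have hu1 : ‖u‖ = 1 := norm_smul_inv_norm hx
    have hmem : enormL2 ((WithLp.equiv 2 (n → ℝ)) u) ≤ 1 := by
      rw [enorm_eq]; simp [hu1]
    have hle : enormL2 (M.mulVec ((WithLp.equiv 2 (n → ℝ)) u)) ≤ specNorm M :=
      le_ciSup (⟨‖mclm M‖, by rintro _ ⟨v, rfl⟩; exact specNorm_bdd M v⟩ :
        BddAbove _) (⟨_, hmem⟩ : {v : n → ℝ // enormL2 v ≤ 1})
    rw [enorm_mulVec] at hle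
    simp only [Equiv.symm_apply_apply] at hle
    have hsm : ‖mclm M u‖ = ‖x‖⁻¹ * ‖mclm M x‖ := by
      rw [hu, map_smul, norm_smul, norm_inv, norm_norm]
    rw [hsm] at hle
    calc ‖mclm M x‖ = ‖x‖ * (‖x‖⁻¹ * ‖mclm M x‖) := by field_simp
      _ ≤ ‖x‖ * specNorm M := mul_le_mul_of_nonneg_left hle (norm_nonneg _)
      _ = specNorm M * ‖x‖ := mul_comm _ _

lemma sigmaMin_le (M : Matrix m n ℝ) (v : EuclideanSpace ℝ m) (hv : ‖v‖ = 1) :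
    sigmaMin M ≤ ‖mclm M.transpose v‖ := by
  have hmem : enormL2 ((WithLp.equiv 2 (m → ℝ)) v) = 1 := by
    rw [enorm_eq]; simp [hv]
  have h := ciInf_le (f := fun v : {v : m → ℝ // enormL2 v = 1} =>
      enormL2 (M.transpose.mulVec v.1))
    ⟨0, by rintro _ ⟨w, rfl⟩; exact enorm_nonneg _⟩ ⟨_, hmem⟩
  rw [enorm_mulVec] at h
  simp at h; exact h

lemma le_sigmaMin (M : Matrix m n ℝ) (c : ℝ)
    [Nonempty {v : m → ℝ // enormL2 v = 1}]
    (h : ∀ v : EuclideanSpace ℝ m, ‖v‖ = 1 → c ≤ ‖mclm M.transpose v‖) :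
    c ≤ sigmaMin M := by
  refine le_ciInf ?_
  rintro ⟨v, hv⟩
  have := h ((WithLp.equiv 2 (m → ℝ)).symm v) hv
  rwa [← enorm_mulVec] at this

lemma mclm_mul (M : Matrix m n ℝ) (N : Matrix n k ℝ) :
    mclm (M * N) = (mclm M).comp (mclm N) := by
  ext x
  simp [mclm_apply, Matrix.mulVec_mulVec]

lemma mclm_one : mclm (1 : Matrix n n ℝ) = ContinuousLinearMap.id ℝ _ := by
  ext x
  simp [mclm_apply]

lemma mclm_sub (M N : Matrix m n ℝ) : mclm (M - N) = mclm M - mclm N := by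
  ext x
  simp [mclm, map_sub]

lemma mclm_transpose (M : Matrix m n ℝ) :
    mclm M.transpose = ContinuousLinearMap.adjoint (mclm M) := by
  rw [mclm, mclm, ← Matrix.conjTranspose_eq_transpose_of_trivial,
    Matrix.toEuclideanLin_conjTranspose_eq_adjoint,
    LinearMap.adjoint_toContinuousLinearMap]

lemma specNorm_transpose (M : Matrix m n ℝ) : specNorm M.transpose = specNorm M := by
  rw [specNorm_eq_opNorm, specNorm_eq_opNorm, mclm_transpose]
  exact LinearIsometryEquiv.norm_map ContinuousLinearMap.adjoint (mclm M)

lemma inner_mclm_transpose (M : Matrix m n ℝ) (x : EuclideanSpace ℝ m)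
    (y : EuclideanSpace ℝ n) : ⟪mclm M.transpose x, y⟫ = ⟪x, mclm M y⟫ := by
  rw [mclm_transpose]
  exact ContinuousLinearMap.adjoint_inner_left (mclm M) y x

lemma homog {E F : Type*} [NormedAddCommGroup E] [NormedSpace ℝ E]
    [NormedAddCommGroup F] [NormedSpace ℝ F]
    (T : E →L[ℝ] F) {c : ℝ} (h : ∀ v, ‖v‖ = 1 → c ≤ ‖T v‖) (v : E) (hc : 0 ≤ c) :
    c * ‖v‖ ≤ ‖T v‖ := by
  rcases eq_or_ne v 0 with rfl | hv
  · simp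
  · have h1 := h (‖v‖⁻¹ • v) (norm_smul_inv_norm hv)
    rw [map_smul, norm_smul, norm_inv, norm_norm] at h1
    have h0 : (0:ℝ) < ‖v‖ := norm_pos_iff.mpr hv
    calc c * ‖v‖ ≤ (‖v‖⁻¹ * ‖T v‖) * ‖v‖ := by nlinarith
      _ = ‖T v‖ := by field_simp

lemma pinv_facts [DecidableEq m] (M : Matrix m n ℝ) (c : ℝ) (hc : 0 < c)
    (h : ∀ v : EuclideanSpace ℝ m, c * ‖v‖ ≤ ‖mclm M.transpose v‖) :
    (M * M.transpose) * (M * M.transpose)⁻¹ = 1 ∧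
    (M * M.transpose)⁻¹ * (M * M.transpose) = 1 ∧
    ‖mclm (pinvFR M)‖ ≤ c⁻¹ := by
  have hinj : Function.Injective ((M * M.transpose).mulVec) := by
    intro x y hxy
    have hsub : (M * M.transpose).mulVec (x - y) = 0 := by
      rw [Matrix.mulVec_sub, hxy, sub_self]
    set z : EuclideanSpace ℝ m := (WithLp.equiv 2 (m → ℝ)).symm (x - y) with hz
    have hz0 : mclm (M * M.transpose) z = 0 := by
      rw [mclm_apply]
      simp [hz, hsub]
    have hip : ‖mclm M.transpose z‖ ^ 2 = 0 := by
      have e : ⟪mclm M.transpose z, mclm M.transpose z⟫ = ⟪z, mclm (M * M.transpose) z⟫ := by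
        rw [inner_mclm_transpose]; simp only [mclm_mul, ContinuousLinearMap.comp_apply]
      rw [← real_inner_self_eq_norm_sq, e, hz0, inner_zero_right]
    have h2 : ‖mclm M.transpose z‖ = 0 := by
      nlinarith [norm_nonneg (mclm M.transpose z)]
    have hzn : ‖z‖ = 0 := by
      have := h z
      nlinarith [norm_nonneg z]
    have hz00 : z = 0 := norm_eq_zero.mp hzn
    have : x - y = 0 := by
      apply (WithLp.equiv 2 (m → ℝ)).symm.injective
      rw [← hz, hz00]
      simp
    exact sub_eq_zero.mp this
  have hdet : IsUnit (M * M.transpose).det :=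
    (Matrix.isUnit_iff_isUnit_det _).mp (Matrix.mulVec_injective_iff_isUnit.mp hinj)
  have h1 : (M * M.transpose) * (M * M.transpose)⁻¹ = 1 := Matrix.mul_nonsing_inv _ hdet
  have h2 : (M * M.transpose)⁻¹ * (M * M.transpose) = 1 := Matrix.nonsing_inv_mul _ hdet
  refine ⟨h1, h2, ?_⟩
  refine ContinuousLinearMap.opNorm_le_bound _ (by positivity) fun x => ?_
  set y : EuclideanSpace ℝ m := mclm (M * M.transpose)⁻¹ x with hy
  have hx : mclm (pinvFR M) x = mclm M.transpose y := by
    simp only [show pinvFR M = M.transpose * (M * M.transpose)⁻¹ from rfl, mclm_mul,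
      ContinuousLinearMap.comp_apply, hy]
  have hMy : mclm M (mclm M.transpose y) = x := by
    have e2 : mclm ((M * M.transpose) * (M * M.transpose)⁻¹) x = x := by
      rw [h1, mclm_one]; rfl
    rw [← e2]
    simp only [mclm_mul, ContinuousLinearMap.comp_apply, hy]
  have hkey : ‖mclm M.transpose y‖ ^ 2 = ⟪x, y⟫ := by
    rw [← real_inner_self_eq_norm_sq, inner_mclm_transpose, hMy, real_inner_comm]
  have hcs : ⟪x, y⟫ ≤ ‖x‖ * ‖y‖ := real_inner_le_norm x y
  have hyb : c * ‖y‖ ≤ ‖mclm M.transpose y‖ := h y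
  rw [hx]
  set t := ‖mclm M.transpose y‖ with hts
  have ht : 0 ≤ t := norm_nonneg _
  rcases eq_or_lt_of_le ht with h0 | h0
  · rw [← h0]; positivity
  · have h3 : t * t ≤ ‖x‖ * ‖y‖ := by nlinarith
    have h5 : ‖y‖ ≤ c⁻¹ * t := by
      have := mul_le_mul_of_nonneg_left hyb (inv_nonneg.mpr hc.le)
      rwa [← mul_assoc, inv_mul_cancel₀ hc.ne', one_mul] at this
    have h6 : t * t ≤ ‖x‖ * (c⁻¹ * t) := h3.trans
      (mul_le_mul_of_nonneg_left h5 (norm_nonneg x))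
    nlinarith [norm_nonneg x, inv_nonneg.mpr hc.le]

lemma proj_norm_le (Q : Matrix n n ℝ) (hsym : Q.transpose = Q) (hidem : Q * Q = Q) :
    ‖mclm Q‖ ≤ 1 := by
  refine ContinuousLinearMap.opNorm_le_bound _ zero_le_one fun x => ?_
  have h1 : ‖mclm Q x‖ ^ 2 = ⟪x, mclm Q x⟫ := by
    rw [← real_inner_self_eq_norm_sq]
    calc ⟪mclm Q x, mclm Q x⟫ = ⟪mclm Q.transpose x, mclm Q x⟫ := by rw [hsym]
      _ = ⟪x, mclm Q (mclm Q x)⟫ := inner_mclm_transpose Q x (mclm Q x)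
      _ = ⟪x, mclm (Q * Q) x⟫ := by simp only [mclm_mul, ContinuousLinearMap.comp_apply]
      _ = ⟪x, mclm Q x⟫ := by rw [hidem]
  have h2 : ⟪x, mclm Q x⟫ ≤ ‖x‖ * ‖mclm Q x‖ := real_inner_le_norm _ _
  have ht : 0 ≤ ‖mclm Q x‖ := norm_nonneg _
  rcases eq_or_lt_of_le ht with h0 | h0
  · rw [← h0, one_mul]; exact norm_nonneg x
  · rw [one_mul]; nlinarith

end PinvAux

open PinvAux Matrix

set_option maxHeartbeats 1000000 in
/-- Under the small-noise condition `δ < σ_min(Ĥ)/(2 l_h)` with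
`‖Ĥ − H̄‖₂ ≤ l_h δ`, the pseudoinverse of the noiseless matrix satisfies
`‖H̄†‖₂ ≤ 2 σ_min(Ĥ)⁻¹` and `‖H̄† − Ĥ†‖₂ ≤ 8 l_h ‖Ĥ†‖₂² δ`. -/
theorem pinv_bounds_small_noise {p q : ℕ}
    (Hhat Hbar : Matrix (Fin p) (Fin q) ℝ) (hH : Hhat.rank = p)
    (δ lh : ℝ) (hlh : 0 < lh) (hδ : δ < sigmaMin Hhat / (2 * lh))
    (hE : specNorm (Hhat - Hbar) ≤ lh * δ) :
    specNorm (pinvFR Hbar) ≤ 2 * (sigmaMin Hhat)⁻¹ ∧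
      specNorm (pinvFR Hbar - pinvFR Hhat) ≤
        8 * lh * specNorm (pinvFR Hhat) ^ 2 * δ := by
  set σ := sigmaMin Hhat with hσdef
  have hEnn : 0 ≤ specNorm (Hhat - Hbar) := specNorm_nonneg _
  have hδ0 : 0 ≤ δ := by nlinarith
  have h2lh : (0:ℝ) < 2 * lh := by linarith
  have hσ2 : δ * (2 * lh) < σ := (lt_div_iff₀ h2lh).mp hδ
  have hσpos : 0 < σ := by nlinarith
  have hlhδ : lh * δ ≤ σ / 2 := by nlinarith
  -- the case p = 0 is contradictory
  rcases Nat.eq_zero_or_pos p with hp | hp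
  · exfalso
    subst hp
    haveI : IsEmpty {v : Fin 0 → ℝ // enormL2 v = 1} := by
      constructor
      rintro ⟨v, hv⟩
      have hv0 : v = 0 := funext fun i => i.elim0
      rw [hv0] at hv
      simp [enormL2, EuclideanSpace.norm_eq] at hv
    have : σ = 0 := Real.iInf_of_isEmpty _
    linarith
  -- a unit vector
  set u : EuclideanSpace ℝ (Fin p) := EuclideanSpace.single ⟨0, hp⟩ (1:ℝ) with hudef
  have hu1 : ‖u‖ = 1 := by
    rw [hudef, EuclideanSpace.norm_single]; norm_num
  haveI hne : Nonempty {v : Fin p → ℝ // enormL2 v = 1} :=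
    ⟨⟨(WithLp.equiv 2 (Fin p → ℝ)) u, by rw [enorm_eq]; simp [hu1]⟩⟩
  -- lower bounds on singular values
  have hA : ∀ v : EuclideanSpace ℝ (Fin p), σ * ‖v‖ ≤ ‖mclm Hhat.transpose v‖ :=
    fun v => homog (mclm Hhat.transpose)
      (fun w hw => sigmaMin_le Hhat w hw) v hσpos.le
  have hEop : ‖mclm (Hhat - Hbar).transpose‖ ≤ lh * δ := by
    rw [← specNorm_eq_opNorm, specNorm_transpose]; exact hE
  have hB : ∀ v : EuclideanSpace ℝ (Fin p), σ / 2 * ‖v‖ ≤ ‖mclm Hbar.transpose v‖ := by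
    intro v
    have h1 := hA v
    have h2 : ‖mclm (Hhat - Hbar).transpose v‖ ≤ (lh * δ) * ‖v‖ :=
      le_trans ((mclm (Hhat - Hbar).transpose).le_opNorm v)
        (mul_le_mul_of_nonneg_right hEop (norm_nonneg v))
    have h3 : ‖mclm Hhat.transpose v‖ ≤ ‖mclm Hbar.transpose v‖
        + ‖mclm (Hhat - Hbar).transpose v‖ := by
      have e : mclm Hhat.transpose v = mclm Hbar.transpose v
          + mclm (Hhat - Hbar).transpose v := by
        rw [Matrix.transpose_sub, mclm_sub]; simp
      rw [e]; exact norm_add_le _ _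
    nlinarith [norm_nonneg v, mul_nonneg (sub_nonneg.mpr hlhδ) (norm_nonneg v)]
  -- pseudoinverse facts
  obtain ⟨hSA1, hSA2, hAn⟩ := pinv_facts Hhat σ hσpos hA
  obtain ⟨hSB1, hSB2, hBn⟩ := pinv_facts Hbar (σ/2) (by linarith) hB
  have k1 : Hhat * pinvFR Hhat = 1 := by
    rw [show pinvFR Hhat = Hhat.transpose * (Hhat * Hhat.transpose)⁻¹ from rfl,
      ← Matrix.mul_assoc]; exact hSA1
  have k2 : Hbar * pinvFR Hbar = 1 := by
    rw [show pinvFR Hbar = Hbar.transpose * (Hbar * Hbar.transpose)⁻¹ from rfl,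
      ← Matrix.mul_assoc]; exact hSB1
  have hSAinvT : ((Hhat * Hhat.transpose)⁻¹).transpose = (Hhat * Hhat.transpose)⁻¹ := by
    rw [Matrix.transpose_nonsing_inv, Matrix.transpose_mul, Matrix.transpose_transpose]
  have hSBinvT : ((Hbar * Hbar.transpose)⁻¹).transpose = (Hbar * Hbar.transpose)⁻¹ := by
    rw [Matrix.transpose_nonsing_inv, Matrix.transpose_mul, Matrix.transpose_transpose]
  have k3 : (pinvFR Hhat).transpose * pinvFR Hhat = (Hhat * Hhat.transpose)⁻¹ := by
    rw [show pinvFR Hhat = Hhat.transpose * (Hhat * Hhat.transpose)⁻¹ from rfl,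
      Matrix.transpose_mul, Matrix.transpose_transpose, hSAinvT,
      Matrix.mul_assoc, ← Matrix.mul_assoc Hhat Hhat.transpose _, hSA1, Matrix.mul_one]
  have k4 : pinvFR Hbar * (Hbar * Hbar.transpose) = Hbar.transpose := by
    rw [show pinvFR Hbar = Hbar.transpose * (Hbar * Hbar.transpose)⁻¹ from rfl,
      Matrix.mul_assoc, hSB2, Matrix.mul_one]
  -- first conclusion
  have hBn' : specNorm (pinvFR Hbar) ≤ 2 * σ⁻¹ := by
    rw [specNorm_eq_opNorm]
    have : (σ/2)⁻¹ = 2 * σ⁻¹ := by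
      rw [inv_div, div_eq_mul_inv]
    linarith [hBn, this ▸ hBn]
  refine ⟨hBn', ?_⟩
  -- σ⁻¹ ≤ specNorm (pinvFR Hhat)
  set a := specNorm (pinvFR Hhat) with hadef
  have hTid : (pinvFR Hhat).transpose * Hhat.transpose = 1 := by
    rw [← Matrix.transpose_mul, k1, Matrix.transpose_one]
  have hainv : ∀ v : EuclideanSpace ℝ (Fin p), ‖v‖ = 1 →
      1 ≤ a * ‖mclm Hhat.transpose v‖ := by
    intro v hv
    have hvid : v = mclm ((pinvFR Hhat).transpose * Hhat.transpose) v := by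
      rw [hTid, mclm_one]; rfl
    have h1 : ‖v‖ ≤ ‖mclm (pinvFR Hhat).transpose‖ * ‖mclm Hhat.transpose v‖ := by
      conv_lhs => rw [hvid]
      rw [mclm_mul]
      exact (mclm (pinvFR Hhat).transpose).le_opNorm _
    have h2 : ‖mclm (pinvFR Hhat).transpose‖ = a := by
      rw [← specNorm_eq_opNorm, specNorm_transpose]
    rw [hv, h2] at h1
    exact h1
  have ha0 : 0 ≤ a := specNorm_nonneg _
  have ha_pos : 0 < a := by
    have := hainv u hu1
    nlinarith [norm_nonneg (mclm Hhat.transpose u)]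
  have hinva : σ⁻¹ ≤ a := by
    have h2 : a⁻¹ ≤ σ := by
      apply le_sigmaMin
      intro v hv
      have h3 := mul_le_mul_of_nonneg_left (hainv v hv) (inv_nonneg.mpr ha_pos.le)
      rwa [mul_one, ← mul_assoc, inv_mul_cancel₀ ha_pos.ne', one_mul] at h3
    have h4 := mul_le_mul_of_nonneg_left h2 ha_pos.le
    rw [mul_inv_cancel₀ ha_pos.ne'] at h4
    -- h4 : 1 ≤ a * σ
    have h5 := mul_le_mul_of_nonneg_left h4 (inv_nonneg.mpr hσpos.le)
    rw [mul_one] at h5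
    calc σ⁻¹ ≤ σ⁻¹ * (a * σ) := h5
      _ = a := by rw [mul_comm a σ, ← mul_assoc, inv_mul_cancel₀ hσpos.ne', one_mul]
  -- projection facts
  have hPsym : (pinvFR Hbar * Hbar).transpose = pinvFR Hbar * Hbar := by
    rw [show pinvFR Hbar = Hbar.transpose * (Hbar * Hbar.transpose)⁻¹ from rfl,
      Matrix.transpose_mul, Matrix.transpose_mul, Matrix.transpose_transpose, hSBinvT,
      Matrix.mul_assoc]
  have hPidem : (pinvFR Hbar * Hbar) * (pinvFR Hbar * Hbar) = pinvFR Hbar * Hbar := by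
    calc (pinvFR Hbar * Hbar) * (pinvFR Hbar * Hbar)
        = pinvFR Hbar * ((Hbar * pinvFR Hbar) * Hbar) := by
          simp [Matrix.mul_assoc]
      _ = pinvFR Hbar * Hbar := by rw [k2, Matrix.one_mul]
  have hQsym : (1 - pinvFR Hbar * Hbar).transpose = 1 - pinvFR Hbar * Hbar := by
    rw [Matrix.transpose_sub, Matrix.transpose_one, hPsym]
  have hQidem : (1 - pinvFR Hbar * Hbar) * (1 - pinvFR Hbar * Hbar)
      = 1 - pinvFR Hbar * Hbar := by
    calc (1 - pinvFR Hbar * Hbar) * (1 - pinvFR Hbar * Hbar)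
        = 1 - pinvFR Hbar * Hbar
          - (pinvFR Hbar * Hbar - (pinvFR Hbar * Hbar) * (pinvFR Hbar * Hbar)) := by
          noncomm_ring
      _ = 1 - pinvFR Hbar * Hbar := by rw [hPidem]; simp
  have hQn : ‖mclm (1 - pinvFR Hbar * Hbar)‖ ≤ 1 := proj_norm_le _ hQsym hQidem
  -- the key identity
  have k4' : pinvFR Hbar * (Hbar * (Hbar.transpose * (Hhat * Hhat.transpose)⁻¹))
      = Hbar.transpose * (Hhat * Hhat.transpose)⁻¹ := by
    rw [← Matrix.mul_assoc Hbar Hbar.transpose _, ← Matrix.mul_assoc, k4]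
  have e1 : pinvFR Hbar * ((Hhat - Hbar) * pinvFR Hhat)
      = pinvFR Hbar - pinvFR Hbar * (Hbar * pinvFR Hhat) := by
    rw [Matrix.sub_mul, k1, Matrix.mul_sub, Matrix.mul_one]
  have e2 : (1 - pinvFR Hbar * Hbar) *
        ((Hhat - Hbar).transpose * ((pinvFR Hhat).transpose * pinvFR Hhat))
      = pinvFR Hhat - pinvFR Hbar * (Hbar * pinvFR Hhat) := by
    rw [k3]
    have f1 : (Hhat - Hbar).transpose * (Hhat * Hhat.transpose)⁻¹
        = pinvFR Hhat - Hbar.transpose * (Hhat * Hhat.transpose)⁻¹ := by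
      rw [Matrix.transpose_sub, Matrix.sub_mul]; rfl
    rw [f1, Matrix.sub_mul, Matrix.one_mul, Matrix.mul_sub,
      Matrix.mul_assoc (pinvFR Hbar) Hbar (pinvFR Hhat),
      Matrix.mul_assoc (pinvFR Hbar) Hbar (Hbar.transpose * (Hhat * Hhat.transpose)⁻¹), k4']
    abel
  have hid : pinvFR Hbar - pinvFR Hhat
      = pinvFR Hbar * ((Hhat - Hbar) * pinvFR Hhat)
        - (1 - pinvFR Hbar * Hbar) *
          ((Hhat - Hbar).transpose * ((pinvFR Hhat).transpose * pinvFR Hhat)) := by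
    rw [e1, e2]; abel
  -- norm estimate
  have hend : specNorm (pinvFR Hbar - pinvFR Hhat)
      ≤ specNorm (pinvFR Hbar) * (specNorm (Hhat - Hbar) * a)
        + 1 * (specNorm (Hhat - Hbar) * (a * a)) := by
    rw [specNorm_eq_opNorm, hid, mclm_sub]
    refine le_trans (norm_sub_le _ _) ?_
    have t1 : ‖mclm (pinvFR Hbar * ((Hhat - Hbar) * pinvFR Hhat))‖
        ≤ specNorm (pinvFR Hbar) * (specNorm (Hhat - Hbar) * a) := by
      rw [mclm_mul, mclm_mul]
      refine le_trans (ContinuousLinearMap.opNorm_comp_le _ _) ?_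
      have := ContinuousLinearMap.opNorm_comp_le (mclm (Hhat - Hbar)) (mclm (pinvFR Hhat))
      have hnn : (0:ℝ) ≤ ‖mclm (pinvFR Hbar)‖ := norm_nonneg _
      rw [specNorm_eq_opNorm, specNorm_eq_opNorm, hadef, specNorm_eq_opNorm]
      exact mul_le_mul_of_nonneg_left this hnn
    have t2 : ‖mclm ((1 - pinvFR Hbar * Hbar) *
          ((Hhat - Hbar).transpose * ((pinvFR Hhat).transpose * pinvFR Hhat)))‖
        ≤ 1 * (specNorm (Hhat - Hbar) * (a * a)) := by
      rw [mclm_mul, mclm_mul, mclm_mul]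
      refine le_trans (ContinuousLinearMap.opNorm_comp_le _ _) ?_
      have i1 : ‖(mclm (Hhat - Hbar).transpose).comp
            ((mclm (pinvFR Hhat).transpose).comp (mclm (pinvFR Hhat)))‖
          ≤ specNorm (Hhat - Hbar) * (a * a) := by
        refine le_trans (ContinuousLinearMap.opNorm_comp_le _ _) ?_
        have i2 : ‖(mclm (pinvFR Hhat).transpose).comp (mclm (pinvFR Hhat))‖ ≤ a * a := by
          refine le_trans (ContinuousLinearMap.opNorm_comp_le _ _) ?_
          rw [hadef, specNorm_eq_opNorm]
          have : ‖mclm (pinvFR Hhat).transpose‖ = ‖mclm (pinvFR Hhat)‖ := by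
            rw [← specNorm_eq_opNorm, specNorm_transpose, specNorm_eq_opNorm]
          rw [this]
        have i3 : ‖mclm (Hhat - Hbar).transpose‖ = specNorm (Hhat - Hbar) := by
          rw [← specNorm_eq_opNorm, specNorm_transpose]
        rw [← i3]
        exact mul_le_mul_of_nonneg_left i2 (norm_nonneg _)
      exact mul_le_mul hQn i1 (norm_nonneg _) zero_le_one
    exact add_le_add t1 t2
  have hb2 : specNorm (pinvFR Hbar) ≤ 2 * σ⁻¹ := hBn'
  have heE : specNorm (Hhat - Hbar) ≤ lh * δ := hE
  nlinarith [hend, hEnn, ha0, hσpos, hinva, hb2, heE, hδ0, hlh,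
    mul_nonneg hEnn ha0, mul_nonneg (mul_nonneg hEnn ha0) ha0,
    mul_nonneg (mul_nonneg ha0 ha0) (mul_nonneg hlh.le hδ0),
    mul_le_mul_of_nonneg_right hinva (mul_nonneg hEnn ha0),
    mul_le_mul_of_nonneg_right hb2 (mul_nonneg hEnn ha0)]
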